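/- Let M be a binary matrix (no all-zero row, no duplicated columns) with containment digraph D_M of height h (maximum number of vertices on a directed path in D_M). Then for every branching B of D_M, |U(B)| ≤ h · β(M), where β(M) is the minimum of |U(B')| over all branchings B' of D_M. In particular, the empty branching satisfies |U(∅)| ≤ h · β(M). -/

import Mathlib

/-- The support of column `j` of binary matrix `M`: the set of rows with a `1` in column `j`. -/
def Supp {α β : Type*} [Fintype α] [DecidableEq α] (M : α → β → Bool) (j : β) : Finset α :=
  Finset.univ.filter (fun r => M r j = true)

/-- `M` is conflict-free: no two columns contain three rows forming the pattern
`[[1,1],[1,0],[0,1]]`. -/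
def ConflictFree {α β : Type*} (M : α → β → Bool) : Prop :=
  ∀ i j : β, ¬ ∃ r r' r'' : α, M r i = true ∧ M r j = true ∧ M r' i = true ∧
    M r' j = false ∧ M r'' i = false ∧ M r'' j = true

/-- `M'` is a row split of `M` via the assignment `f` of rows of `M'` to rows of `M`:
the parts are nonempty (`f` surjective) and each row of `M` is the bitwise OR of its part. -/
def IsRowSplit {α α' β : Type*} (M : α → β → Bool) (M' : α' → β → Bool) (f : α' → α) : Prop :=
  Function.Surjective f ∧ ∀ i j, M i j = true ↔ ∃ r', f r' = i ∧ M' r' j = true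

/-- `v` is a vertex of the containment digraph `D_M`, i.e. the support of some column. -/
def IsSupport {α β : Type*} [Fintype α] [DecidableEq α] (M : α → β → Bool)
    (v : Finset α) : Prop := ∃ j, v = Supp M j

/-- `B` is a branching of the containment digraph `D_M`: its arcs are arcs of `D_M`
(proper inclusions of supports) and every vertex has at most one outgoing arc. -/
def IsBranching {α β : Type*} [Fintype α] [DecidableEq α] (M : α → β → Bool)
    (B : Finset α → Finset α → Prop) : Prop :=
  (∀ u v, B u v → IsSupport M u ∧ IsSupport M v ∧ u ⊂ v) ∧
  (∀ u v w, B u v → B u w → v = w)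

/-- The set `U(B)` of `B`-uncovered pairs `(r, v)`: `v` a vertex of `D_M`, `r ∈ v`, and
`r` belongs to no `B`-in-neighbor of `v`. -/
def UncovPairs {α β : Type*} [Fintype α] [DecidableEq α] (M : α → β → Bool)
    (B : Finset α → Finset α → Prop) : Set (α × Finset α) :=
  {p | IsSupport M p.2 ∧ p.1 ∈ p.2 ∧ ∀ u, B u p.2 → p.1 ∉ u}

/-- The set `I(B)` of `B`-irreducible vertices of `D_M`. -/
def IrredVerts {α β : Type*} [Fintype α] [DecidableEq α] (M : α → β → Bool)
    (B : Finset α → Finset α → Prop) : Set (Finset α) :=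
  {v | IsSupport M v ∧ ∃ r ∈ v, ∀ u, B u v → r ∉ u}

/-- `γ(M)`: the minimum number of rows of a conflict-free row split of `M`. -/
noncomputable def gammaM {α β : Type*} (M : α → β → Bool) : ℕ :=
  sInf {k | ∃ (m' : ℕ) (M' : Fin m' → β → Bool) (f : Fin m' → α),
    IsRowSplit M M' f ∧ ConflictFree M' ∧ k = m'}

/-- `η(M)`: the minimum number of pairwise distinct rows of a conflict-free row split of `M`. -/
noncomputable def etaM {α β : Type*} [Fintype β] [DecidableEq β] (M : α → β → Bool) : ℕ :=
  sInf {k | ∃ (m' : ℕ) (M' : Fin m' → β → Bool) (f : Fin m' → α),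
    IsRowSplit M M' f ∧ ConflictFree M' ∧
    k = (Finset.univ.image (fun r : Fin m' => fun j => M' r j)).card}

/-- `β(M)`: the minimum number of uncovered pairs over all branchings of `D_M`. -/
noncomputable def betaM {α β : Type*} [Fintype α] [DecidableEq α] (M : α → β → Bool) : ℕ :=
  sInf {k | ∃ B, IsBranching M B ∧ (UncovPairs M B).ncard = k}

/-- `ζ(M)`: the minimum number of irreducible vertices over all branchings of `D_M`. -/
noncomputable def zetaM {α β : Type*} [Fintype α] [DecidableEq α] (M : α → β → Bool) : ℕ :=
  sInf {k | ∃ B, IsBranching M B ∧ (IrredVerts M B).ncard = k}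


-- Auxiliary: the (unique) successor of a vertex along a branching.
open Classical in
noncomputable def succF {α : Type*} (B : Finset α → Finset α → Prop) (v : Finset α) :
    Finset α :=
  if h : ∃ w, B v w then h.choose else v

-- Auxiliary: some in-neighbor of `v` containing `r`, if one exists.
open Classical in
noncomputable def downF {α : Type*} (B : Finset α → Finset α → Prop) (r : α) (v : Finset α) :
    Finset α :=
  if h : ∃ u, B u v ∧ r ∈ u then h.choose else v

lemma succF_eq {α β : Type*} [Fintype α] [DecidableEq α] {M : α → β → Bool}
    {B : Finset α → Finset α → Prop} (hB : IsBranching M B) {v w : Finset α} (hvw : B v w) :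
    succF B v = w := by
  have he : ∃ w, B v w := ⟨w, hvw⟩
  rw [succF, dif_pos he]
  exact hB.2 v _ _ he.choose_spec hvw

lemma downF_spec {α : Type*} {B : Finset α → Finset α → Prop} {r : α} {v : Finset α}
    (hc : ∃ u, B u v ∧ r ∈ u) : B (downF B r v) v ∧ r ∈ downF B r v := by
  rw [downF, dif_pos hc]; exact hc.choose_spec

lemma downF_eq {α : Type*} {B : Finset α → Finset α → Prop} {r : α} {v : Finset α}
    (hc : ¬ ∃ u, B u v ∧ r ∈ u) : downF B r v = v := by
  rw [downF, dif_neg hc]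

lemma downF_ssub {α β : Type*} [Fintype α] [DecidableEq α] {M : α → β → Bool}
    {B : Finset α → Finset α → Prop} (hB : IsBranching M B) {r : α} {v : Finset α}
    (hc : ∃ u, B u v ∧ r ∈ u) : downF B r v ⊂ v :=
  (hB.1 _ _ (downF_spec hc).1).2.2

lemma aux_iter_mem {α β : Type*} [Fintype α] [DecidableEq α] {M : α → β → Bool}
    {B : Finset α → Finset α → Prop} (hB : IsBranching M B) (r : α) (v : Finset α)
    (hv : IsSupport M v) (hr : r ∈ v) (k : ℕ) :
    r ∈ (downF B r)^[k] v ∧ IsSupport M ((downF B r)^[k] v) := by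
  induction k with
  | zero => exact ⟨hr, hv⟩
  | succ k ih =>
    rw [Function.iterate_succ_apply']
    by_cases hc : ∃ u, B u ((downF B r)^[k] v) ∧ r ∈ u
    · exact ⟨(downF_spec hc).2, (hB.1 _ _ (downF_spec hc).1).1⟩
    · rw [downF_eq hc]; exact ih

lemma aux_term {α β : Type*} [Fintype α] [DecidableEq α] {M : α → β → Bool}
    {B : Finset α → Finset α → Prop} (hB : IsBranching M B) (r : α) (v : Finset α) :
    ∃ k, downF B r ((downF B r)^[k] v) = (downF B r)^[k] v := by
  have main : ∀ N : ℕ, ∀ v : Finset α, v.card ≤ N →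
      ∃ k, downF B r ((downF B r)^[k] v) = (downF B r)^[k] v := by
    intro N
    induction N with
    | zero =>
      intro v hv
      by_cases hc : ∃ u, B u v ∧ r ∈ u
      · exact absurd (Finset.card_lt_card (downF_ssub hB hc)) (by omega)
      · exact ⟨0, downF_eq hc⟩
    | succ N ih =>
      intro v hv
      by_cases hc : ∃ u, B u v ∧ r ∈ u
      · obtain ⟨k, hk⟩ := ih (downF B r v)
          (by have := Finset.card_lt_card (downF_ssub hB hc); omega)
        exact ⟨k + 1, by rw [Function.iterate_succ_apply]; exact hk⟩
      · exact ⟨0, downF_eq hc⟩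
  exact main v.card v le_rfl

/-- Auxiliary: the first index at which the descent iteration becomes stationary. -/
noncomputable def IFix {α : Type*} (B : Finset α → Finset α → Prop)
    (p : α × Finset α) : ℕ :=
  sInf {k | downF B p.1 ((downF B p.1)^[k] p.2) = (downF B p.1)^[k] p.2}

lemma IFix_fix {α β : Type*} [Fintype α] [DecidableEq α] {M : α → β → Bool}
    {B : Finset α → Finset α → Prop} (hB : IsBranching M B) (p : α × Finset α) :
    downF B p.1 ((downF B p.1)^[IFix B p] p.2) = (downF B p.1)^[IFix B p] p.2 := by
  obtain ⟨k, hk⟩ := aux_term hB p.1 p.2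
  have hne : {k | downF B p.1 ((downF B p.1)^[k] p.2) = (downF B p.1)^[k] p.2}.Nonempty :=
    ⟨k, hk⟩
  exact Nat.sInf_mem hne

lemma IFix_min {α : Type*} {B : Finset α → Finset α → Prop} (p : α × Finset α)
    {j : ℕ} (hj : j < IFix B p) :
    ∃ u, B u ((downF B p.1)^[j] p.2) ∧ p.1 ∈ u := by
  by_contra hc
  exact absurd hj (Nat.not_lt.mpr (Nat.sInf_le (downF_eq hc)))

lemma aux_recon {α β : Type*} [Fintype α] [DecidableEq α] {M : α → β → Bool}
    {B : Finset α → Finset α → Prop} (hB : IsBranching M B) (r : α) (v : Finset α) (k : ℕ)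
    (hcov : ∀ j < k, ∃ u, B u ((downF B r)^[j] v) ∧ r ∈ u) :
    (succF B)^[k] ((downF B r)^[k] v) = v := by
  induction k with
  | zero => rfl
  | succ k ih =>
    have hck := hcov k (Nat.lt_succ_self k)
    rw [Function.iterate_succ_apply (succF B), Function.iterate_succ_apply' (downF B r),
      succF_eq hB (downF_spec hck).1]
    exact ih (fun j hj => hcov j (hj.trans (Nat.lt_succ_self k)))

lemma aux_ncard_prod {A B : Type*} (s : Set A) (t : Set B) :
    (s ×ˢ t).ncard = s.ncard * t.ncard := by
  rw [← Nat.card_coe_set_eq, ← Nat.card_coe_set_eq, ← Nat.card_coe_set_eq,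
    Nat.card_congr (Equiv.Set.prod s t), Nat.card_prod]

lemma empty_bound {m n : ℕ} (M : Fin m → Fin n → Bool) (h : ℕ)
    (hmax : ∀ l : List (Finset (Fin m)), (∀ v ∈ l, IsSupport M v) →
      l.Chain' (· ⊂ ·) → l.length ≤ h) :
    (UncovPairs M (fun _ _ => False)).ncard ≤ h * betaM M := by
  classical
  have hne : {k | ∃ B, IsBranching M B ∧ (UncovPairs M B).ncard = k}.Nonempty :=
    ⟨_, fun _ _ => False, ⟨fun u v hf => hf.elim, fun u v w hf _ => hf.elim⟩, rfl⟩
  obtain ⟨B, hB, hBcard⟩ : ∃ B, IsBranching M B ∧ (UncovPairs M B).ncard = betaM M :=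
    Nat.sInf_mem hne
  set s : Set (Fin m × Finset (Fin m)) := UncovPairs M (fun _ _ => False) with hsdef
  have hrecon : ∀ p : Fin m × Finset (Fin m),
      (succF B)^[IFix B p] ((downF B p.1)^[IFix B p] p.2) = p.2 := by
    intro p
    exact aux_recon hB p.1 p.2 (IFix B p) (fun j hj => IFix_min p hj)
  have hmem : ∀ p ∈ s, ∀ k, p.1 ∈ (downF B p.1)^[k] p.2 ∧
      IsSupport M ((downF B p.1)^[k] p.2) := by
    intro p hp k
    exact aux_iter_mem hB p.1 p.2 hp.1 hp.2.1 k
  -- height bound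
  have hheight : ∀ p ∈ s, IFix B p + 1 ≤ h := by
    intro p hp
    have hchain : ((List.range (IFix B p + 1)).map
        (fun k => (downF B p.1)^[IFix B p - k] p.2)).Chain' (· ⊂ ·) := by
      unfold List.Chain'
      rw [List.isChain_map, List.isChain_range_succ]
      intro k hk
      have hj : IFix B p - k = (IFix B p - (k + 1)) + 1 := by omega
      rw [hj, Function.iterate_succ_apply']
      exact downF_ssub hB (IFix_min p (j := IFix B p - (k + 1)) (by omega))
    have hsup : ∀ v ∈ (List.range (IFix B p + 1)).map
        (fun k => (downF B p.1)^[IFix B p - k] p.2), IsSupport M v := by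
      intro v hv
      rw [List.mem_map] at hv
      obtain ⟨k, _, rfl⟩ := hv
      exact (hmem p hp _).2
    have := hmax _ hsup hchain
    simpa using this
  -- the injection
  have hmaps : Set.MapsTo (fun p => ((p.1, (downF B p.1)^[IFix B p] p.2), IFix B p)) s
      ((UncovPairs M B) ×ˢ (Set.Iio h)) := by
    intro p hp
    refine ⟨⟨(hmem p hp (IFix B p)).2, (hmem p hp (IFix B p)).1, ?_⟩, ?_⟩
    · intro u hu hru
      have h1 := downF_ssub hB (v := (downF B p.1)^[IFix B p] p.2) ⟨u, hu, hru⟩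
      rw [IFix_fix hB p] at h1
      exact (lt_irrefl _ h1)
    · have := hheight p hp
      simp only [Set.mem_Iio]
      omega
  have hinj : Set.InjOn (fun p => ((p.1, (downF B p.1)^[IFix B p] p.2), IFix B p)) s := by
    intro p hp q hq hpq
    simp only [Prod.mk.injEq] at hpq
    obtain ⟨⟨h1, h2⟩, h3⟩ := hpq
    have h4 : p.2 = q.2 := by
      rw [← hrecon p, ← hrecon q, h2, h3]
    exact Prod.ext h1 h4
  calc s.ncard ≤ ((UncovPairs M B) ×ˢ (Set.Iio h)).ncard := by
        refine Set.ncard_le_ncard_of_injOn _ hmaps hinj ?_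
        exact (Set.toFinite _).prod (Set.finite_Iio h)
    _ = (UncovPairs M B).ncard * (Set.Iio h).ncard := aux_ncard_prod _ _
    _ = betaM M * h := by
        rw [hBcard]
        congr 1
        rw [← Nat.card_coe_set_eq, Nat.card_eq_fintype_card]
        simp
    _ = h * betaM M := mul_comm _ _

/-- If the containment digraph of `M` has height `h` (maximum number of vertices on a
directed path), then every branching `B` of `D_M` satisfies `|U(B)| ≤ h · β(M)`; in
particular this holds for the empty branching. -/
theorem stmt_16 {m n : ℕ} (M : Fin m → Fin n → Bool)
    (hrow : ∀ r, ∃ j, M r j = true)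
    (hdist : ∀ j j' : Fin n, Supp M j = Supp M j' → j = j')
    (h : ℕ)
    (hmax : ∀ l : List (Finset (Fin m)), (∀ v ∈ l, IsSupport M v) →
      l.Chain' (· ⊂ ·) → l.length ≤ h)
    (hex : ∃ l : List (Finset (Fin m)), (∀ v ∈ l, IsSupport M v) ∧
      l.Chain' (· ⊂ ·) ∧ l.length = h)
    (B : Finset (Fin m) → Finset (Fin m) → Prop) (hB : IsBranching M B) :
    (UncovPairs M B).ncard ≤ h * betaM M ∧
    (UncovPairs M (fun _ _ => False)).ncard ≤ h * betaM M := by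
  have h2 := empty_bound M h hmax
  refine ⟨?_, h2⟩
  refine le_trans (Set.ncard_le_ncard ?_ (Set.toFinite _)) h2
  intro p hp
  exact ⟨hp.1, hp.2.1, fun u hf => hf.elim⟩
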